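/- If S is a nearly Gorenstein numerical semigroup with embedding dimension 4, then S satisfies Wilf's inequality: F(S) + 1 ≤ n(S) · ν(S), where n(S) is the number of elements of S that are ≤ F(S) and ν(S) = 4 is the embedding dimension. -/

import Mathlib

/-- A numerical semigroup: a subset of ℕ containing 0, closed under addition,
with finite complement. -/
def IsNumSgp (S : Set ℕ) : Prop :=
  0 ∈ S ∧ (∀ a ∈ S, ∀ b ∈ S, a + b ∈ S) ∧ (Sᶜ : Set ℕ).Finite

/-- An integer belongs to (the image in ℤ of) S. -/
def memZ (S : Set ℕ) (z : ℤ) : Prop := ∃ s ∈ S, (s : ℤ) = z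

/-- F is the Frobenius number of S: the largest natural number not in S. -/
def IsFrob (S : Set ℕ) (F : ℕ) : Prop := F ∉ S ∧ ∀ n, F < n → n ∈ S

/-- The set of pseudo-Frobenius numbers of S. -/
def PF (S : Set ℕ) : Set ℕ := {f | f ∉ S ∧ ∀ s ∈ S, s ≠ 0 → f + s ∈ S}

/-- n is a minimal generator of S. -/
def IsMinGen (S : Set ℕ) (n : ℕ) : Prop :=
  n ∈ S ∧ n ≠ 0 ∧ ¬∃ a ∈ S, ∃ b ∈ S, a ≠ 0 ∧ b ≠ 0 ∧ a + b = n

/-- S is almost symmetric (Nari): F - f ∈ PF(S) for every f ∈ PF(S). -/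
def AlmostSym (S : Set ℕ) (F : ℕ) : Prop :=
  ∀ f ∈ PF S, ∃ g ∈ PF S, (g : ℤ) = (F : ℤ) - (f : ℤ)

/-- S is symmetric: PF(S) = {F(S)} (vacuously true when S = ℕ). -/
def IsSym (S : Set ℕ) : Prop := ∀ F, IsFrob S F → PF S = {F}

/-- (f_1,...,f_ν) is an NG-vector for S with minimal generators n_1,...,n_ν. -/
def IsNGVector {ν : ℕ} (S : Set ℕ) (n f : Fin ν → ℕ) : Prop :=
  ∀ i, f i ∈ PF S ∧ ∀ g ∈ PF S, memZ S ((n i : ℤ) + (f i : ℤ) - (g : ℤ))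

/-- S is nearly Gorenstein (generator criterion): for each minimal generator m
there is f ∈ PF(S) with m + f - g ∈ S for all g ∈ PF(S). -/
def NearlyGGen (S : Set ℕ) : Prop :=
  ∀ m, IsMinGen S m → ∃ f ∈ PF S, ∀ g ∈ PF S, memZ S ((m : ℤ) + (f : ℤ) - (g : ℤ))

/-- The canonical ideal K(S) = {z ∈ ℤ : F - z ∉ S}. -/
def Kan (S : Set ℕ) (F : ℕ) : Set ℤ := {z | ¬ memZ S ((F : ℤ) - z)}

/-- The relative ideal (S - K(S)) = {z ∈ ℤ : z + K(S) ⊆ S}. -/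
def SmK (S : Set ℕ) (F : ℕ) : Set ℤ := {z | ∀ k ∈ Kan S F, memZ S (z + k)}

/-- S is nearly Gorenstein: M(S) ⊆ K(S) + (S - K(S)). -/
def NearlyG (S : Set ℕ) (F : ℕ) : Prop :=
  ∀ m ∈ S, m ≠ 0 → ∃ k ∈ Kan S F, ∃ x ∈ SmK S F, k + x = (m : ℤ)

theorem stmt19 (S : Set ℕ) (F : ℕ) (n : Fin 4 → ℕ)
    (hS : IsNumSgp S) (hF : IsFrob S F) (hmono : StrictMono n)
    (hgen : ∀ m, IsMinGen S m ↔ ∃ i, n i = m)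
    (hNG : ∃ f : Fin 4 → ℕ, IsNGVector S n f) :
    F + 1 ≤ (Set.ncard {s : ℕ | s ∈ S ∧ s ≤ F}) * 4 := by
  classical
  obtain ⟨h0, hadd, -⟩ := hS
  -- basic facts
  have hgapF : ∀ x, x ∉ S → x ≤ F := by
    intro x hx
    by_contra h
    exact hx (hF.2 x (by omega))
  have hFPF : F ∈ PF S := by
    refine ⟨hF.1, fun s hs hs0 => hF.2 _ (by omega)⟩
  -- the multiplicity e
  have hn0 : IsMinGen S (n 0) := (hgen (n 0)).2 ⟨0, rfl⟩
  have hex : ∃ k, k ∈ S ∧ k ≠ 0 := ⟨n 0, hn0.1, hn0.2.1⟩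
  set e := Nat.find hex with he
  have heS : e ∈ S ∧ e ≠ 0 := Nat.find_spec hex
  have hemin : ∀ k, k ∈ S → k ≠ 0 → e ≤ k := by
    intro k hk hk0
    by_contra h
    exact Nat.find_min hex (by omega) ⟨hk, hk0⟩
  -- e is a minimal generator
  have heMG : IsMinGen S e := by
    refine ⟨heS.1, heS.2, ?_⟩
    rintro ⟨a, ha, b, hb, ha0, hb0, hab⟩
    have := hemin a ha ha0
    have := hemin b hb hb0
    omega
  -- gap domination: every gap is dominated by a pseudo-Frobenius number
  have hdom : ∀ x, x ∉ S → ∃ h ∈ PF S, ∃ s ∈ S, x + s = h := by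
    intro x hx
    set T : Finset ℕ := (Finset.range (F + 1)).filter (fun s => s ∈ S ∧ x + s ∉ S) with hT
    have hTne : T.Nonempty := by
      refine ⟨0, ?_⟩
      simp only [hT, Finset.mem_filter, Finset.mem_range]
      exact ⟨by omega, h0, by simpa using hx⟩
    set s := T.max' hTne with hs
    have hsT : s ∈ T := T.max'_mem hTne
    simp only [hT, Finset.mem_filter, Finset.mem_range] at hsT
    refine ⟨x + s, ⟨hsT.2.2, ?_⟩, s, hsT.2.1, rfl⟩
    intro t ht ht0
    by_contra hxt
    have hmem : s + t ∈ T := by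
      simp only [hT, Finset.mem_filter, Finset.mem_range]
      have : x + (s + t) ≤ F := hgapF _ (by rw [← add_assoc]; exact hxt)
      exact ⟨by omega, hadd s hsT.2.1 t ht, by rw [← add_assoc]; exact hxt⟩
    have := T.le_max' _ hmem
    omega
  -- Key: nearly Gorenstein at the multiplicity forces f = F, i.e.
  -- F + e - g ∈ S for every pseudo-Frobenius g
  have hkey : ∀ g ∈ PF S, (F + e - g) ∈ S := by
    obtain ⟨f, hf⟩ := hNG
    obtain ⟨i₀, hi₀⟩ := (hgen e).1 heMG
    obtain ⟨hfPF, hfall⟩ := hf i₀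
    rw [hi₀] at hfall
    -- show f i₀ = F
    have hfF : f i₀ ≤ F := hgapF _ hfPF.1
    obtain ⟨s, hsS, hsv⟩ := hfall F hFPF
    have hs0 : s ≠ 0 := by
      intro h
      subst h
      have : f i₀ + e = F := by push_cast at hsv; omega
      exact hF.1 (this ▸ hfPF.2 e heS.1 heS.2)
    have hse : e ≤ s := hemin s hsS hs0
    have hfeq : f i₀ = F := by push_cast at hsv; omega
    intro g hg
    obtain ⟨s', hs'S, hs'v⟩ := hfall g hg
    have hgF : g ≤ F := hgapF _ hg.1
    have : s' = F + e - g := by rw [hfeq] at hs'v; push_cast at hs'v; omega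
    rwa [← this]
  -- reflection: every gap x satisfies F + e - x ∈ S
  have hrefl : ∀ x, x ∉ S → (F + e - x) ∈ S := by
    intro x hx
    obtain ⟨h, hhPF, s, hsS, hxs⟩ := hdom x hx
    have hhF : h ≤ F := hgapF _ hhPF.1
    have := hadd _ (hkey h hhPF) _ hsS
    have heq : F + e - h + s = F + e - x := by omega
    rwa [heq] at this
  -- counting
  set A : Finset ℕ := (Finset.range (F + 1)).filter (fun s => s ∈ S) with hA
  have hAmem : ∀ y, y ∈ A ↔ (y ∈ S ∧ y ≤ F) := by
    intro y
    simp only [hA, Finset.mem_filter, Finset.mem_range]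
    constructor
    · rintro ⟨h1, h2⟩; exact ⟨h2, by omega⟩
    · rintro ⟨h1, h2⟩; exact ⟨by omega, h1⟩
  set N := A.card with hN
  have hsetA : {s : ℕ | s ∈ S ∧ s ≤ F} = ↑A := by
    ext y; simp [hAmem y]
  rw [hsetA, Set.ncard_coe_finset]
  have h0A : 0 ∈ A := (hAmem 0).2 ⟨h0, by omega⟩
  have hN1 : 1 ≤ N := Finset.card_pos.2 ⟨0, h0A⟩
  -- gaps
  set G : Finset ℕ := (Finset.range (F + 1)).filter (fun s => s ∉ S) with hG
  have hGmem : ∀ y, y ∈ G ↔ y ∉ S := by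
    intro y
    simp only [hG, Finset.mem_filter, Finset.mem_range]
    constructor
    · exact fun h => h.2
    · intro h; exact ⟨by have := hgapF y h; omega, h⟩
  have hcards : N + G.card = F + 1 := by
    have := Finset.card_filter_add_card_filter_not
      (s := Finset.range (F + 1)) (p := fun s => s ∈ S)
    simpa [← hA, ← hG, Finset.card_range] using this
  -- minimal generators image
  have hminwin : ∀ z, z ∈ S → e ≤ z → z < 2 * e → z ∈ Finset.image n Finset.univ := by
    intro z hz hze hz2
    have : IsMinGen S z := by
      refine ⟨hz, by omega, ?_⟩
      rintro ⟨a, ha, b, hb, ha0, hb0, hab⟩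
      have := hemin a ha ha0
      have := hemin b hb hb0
      omega
    obtain ⟨i, hi⟩ := (hgen z).1 this
    exact Finset.mem_image.2 ⟨i, Finset.mem_univ i, hi⟩
  have himg4 : (Finset.image n Finset.univ).card ≤ 4 := by
    calc (Finset.image n Finset.univ).card ≤ (Finset.univ : Finset (Fin 4)).card :=
          Finset.card_image_le
      _ = 4 := by simp
  -- main inequality 1 : G.card ≤ (N - 1) + e
  have hineq1 : G.card ≤ (N - 1) + e := by
    set B : Finset ℕ := (Finset.Icc e (F + e)).filter (fun s => s ∈ S) with hB
    have hGB : G.card ≤ B.card := by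
      apply Finset.card_le_card_of_injOn (fun x => F + e - x)
      · intro x hx
        have hxS := (hGmem x).1 hx
        have hxF : x ≤ F := hgapF _ hxS
        simp only [hB, Finset.mem_coe, Finset.mem_filter, Finset.mem_Icc]
        exact ⟨⟨by omega, by omega⟩, hrefl x hxS⟩
      · intro x hx y hy hxy
        have hxF : x ≤ F := hgapF _ ((hGmem x).1 hx)
        have hyF : y ≤ F := hgapF _ ((hGmem y).1 hy)
        have hxy2 : F + e - x = F + e - y := hxy
        omega
    have hBle : B.card ≤ (N - 1) + e := by
      have hsub : B ⊆ (A.erase 0) ∪ Finset.Ioc F (F + e) := by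
        intro y hy
        simp only [hB, Finset.mem_filter, Finset.mem_Icc] at hy
        rcases le_or_gt y F with h | h
        · exact Finset.mem_union_left _ (Finset.mem_erase.2
            ⟨by have := heS.2; omega, (hAmem y).2 ⟨hy.2, h⟩⟩)
        · exact Finset.mem_union_right _ (Finset.mem_Ioc.2 ⟨h, hy.1.2⟩)
      calc B.card ≤ ((A.erase 0) ∪ Finset.Ioc F (F + e)).card := Finset.card_le_card hsub
        _ ≤ (A.erase 0).card + (Finset.Ioc F (F + e)).card := Finset.card_union_le _ _
        _ = (N - 1) + e := by rw [Finset.card_erase_of_mem h0A, Nat.card_Ioc]; simp [hN]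
    omega
  -- case N = 1
  rcases Nat.lt_or_ge N 2 with hNcase | hNcase
  · -- N = 1 : S ∩ [0,F] = {0}
    have hNeq : N = 1 := by omega
    have hA0 : ∀ y, y ∈ S → y ≤ F → y = 0 := by
      intro y hyS hyF
      have hyA : y ∈ A := (hAmem y).2 ⟨hyS, hyF⟩
      exact Finset.card_le_one.1 (by omega) y hyA 0 h0A
    have hsub : Finset.Icc (F + 1) (F + F + 1) ⊆ Finset.image n Finset.univ := by
      intro y hy
      simp only [Finset.mem_Icc] at hy
      have hyS : y ∈ S := hF.2 y (by omega)
      have : IsMinGen S y := by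
        refine ⟨hyS, by omega, ?_⟩
        rintro ⟨a, ha, b, hb, ha0, hb0, hab⟩
        have ha' : F + 1 ≤ a := by
          by_contra h
          exact ha0 (hA0 a ha (by omega))
        have hb' : F + 1 ≤ b := by
          by_contra h
          exact hb0 (hA0 b hb (by omega))
        omega
      obtain ⟨i, hi⟩ := (hgen y).1 this
      exact Finset.mem_image.2 ⟨i, Finset.mem_univ i, hi⟩
    have := Finset.card_le_card hsub
    rw [Nat.card_Icc] at this
    have : F + 1 ≤ 4 := by omega
    omega
  -- case N ≥ 2
  · have heF : e ≤ F := by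
      have hlt : 1 < A.card := by omega
      obtain ⟨b, hbA, hb0⟩ := Finset.exists_mem_ne hlt 0
      have hb := (hAmem b).1 hbA
      have := hemin b hb.1 hb0
      omega
    -- inequality 2 : e ≤ (N - 1) + 4
    have hineq2 : e ≤ (N - 1) + 4 := by
      have hIcard : (Finset.Icc (F + 1 - e) F).card = e := by
        rw [Nat.card_Icc]; omega
      have hsplit : (Finset.Icc (F + 1 - e) F).card ≤
          ((Finset.Icc (F + 1 - e) F).filter (fun s => s ∈ S)).card
          + ((Finset.Icc (F + 1 - e) F).filter (fun s => s ∉ S)).card := by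
        have hsub2 : Finset.Icc (F + 1 - e) F ⊆
            (Finset.Icc (F + 1 - e) F).filter (fun s => s ∈ S)
            ∪ (Finset.Icc (F + 1 - e) F).filter (fun s => s ∉ S) := by
          intro y hy
          by_cases h : y ∈ S <;>
            simp [Finset.mem_union, Finset.mem_filter, hy, h]
        exact le_trans (Finset.card_le_card hsub2) (Finset.card_union_le _ _)
      have hpart1 : ((Finset.Icc (F + 1 - e) F).filter (fun s => s ∈ S)).card ≤ N - 1 := by
        have hsub : (Finset.Icc (F + 1 - e) F).filter (fun s => s ∈ S) ⊆ A.erase 0 := by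
          intro y hy
          rw [Finset.mem_filter, Finset.mem_Icc] at hy
          refine Finset.mem_erase.2 ⟨by have := heS.2; omega, (hAmem y).2 ⟨hy.2, hy.1.2⟩⟩
        calc ((Finset.Icc (F + 1 - e) F).filter (fun s => s ∈ S)).card
            ≤ (A.erase 0).card := Finset.card_le_card hsub
          _ = N - 1 := Finset.card_erase_of_mem h0A
      have hpart2 : ((Finset.Icc (F + 1 - e) F).filter (fun s => s ∉ S)).card ≤ 4 := by
        have hinj : ((Finset.Icc (F + 1 - e) F).filter (fun s => s ∉ S)).card
            ≤ (Finset.image n Finset.univ).card := by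
          apply Finset.card_le_card_of_injOn (fun x => F + e - x)
          · intro x hx
            rw [Finset.mem_coe, Finset.mem_filter, Finset.mem_Icc] at hx
            obtain ⟨⟨hx1, hx2⟩, hx3⟩ := hx
            exact hminwin (F + e - x) (hrefl x hx3) (by omega) (by omega)
          · intro x hx y hy hxy
            rw [Finset.mem_coe, Finset.mem_filter, Finset.mem_Icc] at hx hy
            obtain ⟨⟨hx1, hx2⟩, hx3⟩ := hx
            obtain ⟨⟨hy1, hy2⟩, hy3⟩ := hy
            have hxy2 : F + e - x = F + e - y := hxy
            omega
        omega
      omega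
    omega
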